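/- (Theorem 1) Let n be a positive integer and define Π_{t,n}(u) = (1/n) Σ_{k∈ℤ} p_t(u − 2k/n) for u ∈ [−1,1]. Then for every t with t n^a ≥ 1, with L = ⌊t n^a⌋: sup_{u∈[−1,1]} |Π_{t,n}(u) − 1/2| ≤ 2 (1 − 4Q_1)^{L−1} · sup_{u∈[−2,2)} |P̄_1(u) − 1/4|. -/

import Mathlib

open MeasureTheory

/-- 4-periodization `P̄ₜ (u) = ∑ₖ pₜ (u - 4k)` of the family of densities `p`. -/
noncomputable def Pbar (p : ℝ → ℝ → ℝ) (t u : ℝ) : ℝ := ∑' k : ℤ, p t (u - 4 * k)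

/-- `Qₜ = inf_{u ∈ [-2,2)} P̄ₜ (u)`. -/
noncomputable def Qinf (p : ℝ → ℝ → ℝ) (t : ℝ) : ℝ := sInf (Pbar p t '' Set.Ico (-2 : ℝ) 2)

/-- `Π_{t,n} (u) = (1/n) ∑ₖ pₜ (u - 2k/n)`, the density at time `t` of the diffusion
on `[-1,1]` with reflecting edges and `n`-periodic initial conditions. -/
noncomputable def PiTN (p : ℝ → ℝ → ℝ) (t : ℝ) (n : ℕ) (u : ℝ) : ℝ :=
  (1 / n) * ∑' k : ℤ, p t (u - 2 * k / n)

open Set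
open scoped ENNReal

namespace Thm1Aux


lemma lint_shift (h : ℝ → ℝ≥0∞) (c : ℝ) : ∫⁻ v, h (v + c) = ∫⁻ v, h v :=
  lintegral_add_right_eq_self h c

lemma lint_Ico_shift (h : ℝ → ℝ≥0∞) (a b c : ℝ) :
    ∫⁻ v in Ico a b, h (v + c) = ∫⁻ v in Ico (a + c) (b + c), h v := by
  rw [← lintegral_indicator measurableSet_Ico, ← lintegral_indicator measurableSet_Ico,
    ← lint_shift (fun v => (Ico (a + c) (b + c)).indicator h v) c]
  congr 1
  funext v
  simp only [Set.indicator_apply, mem_Ico, add_le_add_iff_right, add_lt_add_iff_right]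

lemma lint_partition (h : ℝ → ℝ≥0∞) :
    ∫⁻ v, h v = ∑' k : ℤ, ∫⁻ v in Ico (-2 : ℝ) 2, h (v + 4 * k) := by
  have hS : ∀ k : ℤ, MeasurableSet (Ico (4 * (k : ℝ) - 2) (4 * k + 2)) :=
    fun k => measurableSet_Ico
  have hdisj : Pairwise (Function.onFun Disjoint
      (fun k : ℤ => Ico (4 * (k : ℝ) - 2) (4 * k + 2))) := by
    intro i j hij
    simp only [Function.onFun, Set.disjoint_left, mem_Ico]
    rintro x ⟨h1, h2⟩ ⟨h3, h4⟩
    apply hij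
    have hij1 : (i : ℝ) < j + 1 := by linarith
    have hij2 : (j : ℝ) < i + 1 := by linarith
    have hi1 : (i : ℤ) < j + 1 := by exact_mod_cast hij1
    have hi2 : (j : ℤ) < i + 1 := by exact_mod_cast hij2
    omega
  have hcover : (⋃ k : ℤ, Ico (4 * (k : ℝ) - 2) (4 * k + 2)) = univ := by
    ext v
    simp only [mem_iUnion, mem_Ico, mem_univ, iff_true]
    refine ⟨⌊(v + 2) / 4⌋, ?_, ?_⟩
    · have := Int.floor_le ((v + 2) / 4)
      nlinarith
    · have := Int.lt_floor_add_one ((v + 2) / 4)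
      nlinarith
  calc ∫⁻ v, h v = ∫⁻ v in ⋃ k : ℤ, Ico (4 * (k : ℝ) - 2) (4 * k + 2), h v := by
        rw [hcover, Measure.restrict_univ]
    _ = ∑' k : ℤ, ∫⁻ v in Ico (4 * (k : ℝ) - 2) (4 * k + 2), h v :=
        lintegral_iUnion hS hdisj h
    _ = ∑' k : ℤ, ∫⁻ v in Ico (-2 : ℝ) 2, h (v + 4 * k) := by
        refine tsum_congr fun k => ?_
        rw [lint_Ico_shift h (-2) 2 (4 * k)]
        congr 1 <;> ring

lemma periodic_int {f : ℝ → ℝ≥0∞} (hp : ∀ x, f (x + 4) = f x) (x : ℝ) (k : ℤ) :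
    f (x + 4 * k) = f x := by
  have hPer : Function.Periodic f 4 := hp
  have := hPer.sub_int_mul_eq (x := x + 4 * k) (n := k)
  have hx : x + 4 * (k : ℝ) - (k : ℝ) * 4 = x := by ring
  rw [hx] at this
  exact this.symm

lemma lint_periodic_shift {f : ℝ → ℝ≥0∞} (hp : ∀ x, f (x + 4) = f x) (c : ℝ) :
    ∫⁻ v in Ico (-2 : ℝ) 2, f (v + c) = ∫⁻ v in Ico (-2 : ℝ) 2, f v := by
  set k := ⌊c / 4⌋ with hk
  set c' := c - 4 * k with hc'
  have hc'0 : 0 ≤ c' := by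
    have := Int.floor_le (c / 4); rw [hc', hk]; nlinarith
  have hc'4 : c' < 4 := by
    have := Int.lt_floor_add_one (c / 4); rw [hc', hk]; nlinarith
  have hfc : ∀ v : ℝ, f (v + c) = f (v + c') := by
    intro v
    have hveq : v + c = (v + c') + 4 * (k : ℤ) := by rw [hc']; push_cast; ring
    rw [hveq, periodic_int hp]
  simp_rw [hfc]
  rw [lint_Ico_shift f (-2) 2 c']
  have hsplit : Ico (-2 + c') (2 + c') = Ico (-2 + c') 2 ∪ Ico (2 : ℝ) (2 + c') := by
    rw [Set.Ico_union_Ico_eq_Ico (by linarith) (by linarith)]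
  rw [hsplit, lintegral_union measurableSet_Ico Set.Ico_disjoint_Ico_same]
  have h2 : ∫⁻ v in Ico (2 : ℝ) (2 + c'), f v = ∫⁻ v in Ico (-2 : ℝ) (-2 + c'), f v := by
    have h3 : ∫⁻ v in Ico (-2 : ℝ) (-2 + c'), f v
        = ∫⁻ v in Ico (-2 : ℝ) (-2 + c'), f (v + 4) := by
      refine lintegral_congr fun v => (hp v).symm
    rw [h3, lint_Ico_shift f (-2) (-2 + c') 4]
    congr 1 <;> ring
  have hR := lintegral_union (μ := (volume : Measure ℝ)) (f := f)
    (A := Ico (-2 : ℝ) (-2 + c')) (B := Ico (-2 + c') (2 : ℝ))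
    measurableSet_Ico Set.Ico_disjoint_Ico_same
  rw [Set.Ico_union_Ico_eq_Ico (by linarith) (by linarith)] at hR
  rw [h2, hR, add_comm]

lemma ennreal_amgm (x y : ℝ≥0∞) : x * y ≤ x * x + y * y := by
  rcases le_total x y with h | h
  · calc x * y ≤ y * y := mul_le_mul' h le_rfl
      _ ≤ x * x + y * y := le_add_self
  · calc x * y ≤ x * x := mul_le_mul' le_rfl h
      _ ≤ x * x + y * y := le_self_add



noncomputable def Gf (p : ℝ → ℝ → ℝ) (t u : ℝ) : ℝ≥0∞ := ENNReal.ofReal (p t u)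

noncomputable def Pb (p : ℝ → ℝ → ℝ) (t u : ℝ) : ℝ≥0∞ := ∑' k : ℤ, Gf p t (u - 4 * k)

variable {p : ℝ → ℝ → ℝ} {t s u : ℝ}

lemma measG (hm : Measurable (p t)) : Measurable (Gf p t) :=
  ENNReal.measurable_ofReal.comp hm

lemma measPb (hm : Measurable (p t)) : Measurable (Pb p t) :=
  Measurable.ennreal_tsum fun k => (measG hm).comp (measurable_id.sub_const (4 * (k : ℝ)))

lemma Pb_periodic (x : ℝ) : Pb p t (x + 4) = Pb p t x := by
  unfold Pb
  have h1 : (Pb p t x) = ∑' k : ℤ, Gf p t (x + 4 - 4 * ((Equiv.addRight (1 : ℤ)) k)) := by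
    unfold Pb
    refine tsum_congr fun k => ?_
    congr 1
    simp [Equiv.coe_addRight]
    push_cast
    ring
  rw [show (∑' k : ℤ, Gf p t (x + 4 - 4 * k)) =
    ∑' k : ℤ, Gf p t (x + 4 - 4 * ((Equiv.addRight (1:ℤ)) k)) from
      ((Equiv.addRight (1:ℤ)).tsum_eq fun k => Gf p t (x + 4 - 4 * k)).symm]
  exact h1.symm

lemma Pb_even (hev : ∀ u, p t (-u) = p t u) (x : ℝ) : Pb p t (-x) = Pb p t x := by
  unfold Pb
  rw [show (∑' k : ℤ, Gf p t (x - 4 * k)) =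
    ∑' k : ℤ, Gf p t (x - 4 * ((Equiv.neg ℤ) k)) from
      ((Equiv.neg ℤ).tsum_eq fun k => Gf p t (x - 4 * k)).symm]
  refine tsum_congr fun k => ?_
  have hxk : (x - 4 * (((Equiv.neg ℤ) k : ℤ) : ℝ)) = x + 4 * k := by
    simp only [Equiv.neg_apply, Int.cast_neg]
    ring
  unfold Gf
  rw [hxk, show -x - 4 * (k : ℝ) = -(x + 4 * k) from by ring, hev]

lemma Pbar_periodic (x : ℝ) : Pbar p t (x + 4) = Pbar p t x := by
  unfold Pbar
  have h1 : (∑' k : ℤ, p t (x - 4 * k))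
      = ∑' k : ℤ, p t (x + 4 - 4 * ((Equiv.addRight (1 : ℤ)) k)) := by
    refine tsum_congr fun k => ?_
    congr 1
    simp only [Equiv.coe_addRight]
    push_cast
    ring
  rw [h1, (Equiv.addRight (1:ℤ)).tsum_eq fun k => p t (x + 4 - 4 * k)]

lemma Pbar_eq (hnn : ∀ u, 0 ≤ p t u) (hsum : Summable fun k : ℤ => p t (u - 4 * k)) :
    Pb p t u = ENNReal.ofReal (Pbar p t u) :=
  (ENNReal.ofReal_tsum_of_nonneg (fun k => hnn _) hsum).symm

lemma Pb_ne_top (hnn : ∀ u, 0 ≤ p t u) (hsum : Summable fun k : ℤ => p t (u - 4 * k)) :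
    Pb p t u ≠ ∞ := by
  rw [Pbar_eq hnn hsum]; exact ENNReal.ofReal_ne_top

lemma Pbar_toReal (hnn : ∀ u, 0 ≤ p t u) (hsum : Summable fun k : ℤ => p t (u - 4 * k)) :
    Pbar p t u = (Pb p t u).toReal := by
  rw [Pbar_eq hnn hsum, ENNReal.toReal_ofReal (by unfold Pbar; exact tsum_nonneg fun k => hnn _)]

lemma integrable_p (hm : Measurable (p t)) (h1 : ∫ u, p t u = 1) :
    Integrable (p t) := by
  by_contra h
  rw [integral_undef h] at h1
  norm_num at h1

lemma lintG (hm : Measurable (p t)) (hnn : ∀ u, 0 ≤ p t u) (h1 : ∫ u, p t u = 1) :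
    ∫⁻ u, Gf p t u = 1 := by
  unfold Gf
  rw [← ofReal_integral_eq_lintegral_ofReal (integrable_p hm h1) (Filter.Eventually.of_forall hnn),
    h1]
  norm_num



variable {p : ℝ → ℝ → ℝ} {s t u : ℝ}

lemma convG (hms : Measurable (p s)) (hmt : Measurable (p t))
    (hnns : ∀ u, 0 ≤ p s u) (hnnt : ∀ u, 0 ≤ p t u)
    (h1s : ∫ u, p s u = 1) {C : ℝ} (hC : ∀ u, p t u ≤ C)
    (hconv : p (s + t) u = ∫ v, p s v * p t (u - v)) :
    Gf p (s + t) u = ∫⁻ v, Gf p s v * Gf p t (u - v) := by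
  have hmint : Measurable fun v => p s v * p t (u - v) :=
    hms.mul (hmt.comp (measurable_const.sub measurable_id))
  have hnnint : ∀ v, 0 ≤ p s v * p t (u - v) := fun v => mul_nonneg (hnns v) (hnnt _)
  have hofm : ∀ v, ENNReal.ofReal (p s v * p t (u - v)) = Gf p s v * Gf p t (u - v) :=
    fun v => ENNReal.ofReal_mul (hnns v)
  have hle : ∫⁻ v, Gf p s v * Gf p t (u - v) ≤ ENNReal.ofReal C := by
    calc ∫⁻ v, Gf p s v * Gf p t (u - v)
        ≤ ∫⁻ v, Gf p s v * ENNReal.ofReal C :=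
          lintegral_mono fun v => mul_le_mul_right (ENNReal.ofReal_le_ofReal (hC _)) _
      _ = (∫⁻ v, Gf p s v) * ENNReal.ofReal C := lintegral_mul_const _ (measG hms)
      _ = ENNReal.ofReal C := by rw [lintG hms hnns h1s, one_mul]
  have hint : Integrable fun v => p s v * p t (u - v) := by
    refine ⟨hmint.aestronglyMeasurable, ?_⟩
    rw [hasFiniteIntegral_iff_ofReal (Filter.Eventually.of_forall hnnint)]
    calc ∫⁻ v, ENNReal.ofReal (p s v * p t (u - v))
        = ∫⁻ v, Gf p s v * Gf p t (u - v) := lintegral_congr fun v => hofm v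
      _ ≤ ENNReal.ofReal C := hle
      _ < ∞ := ENNReal.ofReal_lt_top
  show ENNReal.ofReal (p (s + t) u) = _
  rw [hconv, ofReal_integral_eq_lintegral_ofReal hint (Filter.Eventually.of_forall hnnint)]
  exact lintegral_congr fun v => hofm v

lemma convPb (hms : Measurable (p s)) (hmt : Measurable (p t))
    (hconvG : ∀ w, Gf p (s + t) w = ∫⁻ v, Gf p s v * Gf p t (w - v)) :
    Pb p (s + t) u = ∫⁻ v, Gf p s v * Pb p t (u - v) := by
  have key : ∀ v, (∑' k : ℤ, Gf p s v * Gf p t (u - 4 * k - v)) = Gf p s v * Pb p t (u - v) := by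
    intro v
    rw [ENNReal.tsum_mul_left]
    congr 1
    exact tsum_congr fun k => by congr 1; ring
  calc Pb p (s + t) u = ∑' k : ℤ, ∫⁻ v, Gf p s v * Gf p t (u - 4 * k - v) := by
        unfold Pb
        refine tsum_congr fun k => ?_
        rw [hconvG (u - 4 * k)]
    _ = ∫⁻ v, ∑' k : ℤ, Gf p s v * Gf p t (u - 4 * k - v) :=
        (lintegral_tsum fun k => ((measG hms).mul ((measG hmt).comp
          (measurable_const.sub measurable_id))).aemeasurable).symm
    _ = ∫⁻ v, Gf p s v * Pb p t (u - v) := lintegral_congr fun v => key v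

lemma foldPb (hms : Measurable (p s)) (f : ℝ → ℝ≥0∞) (hf : Measurable f)
    (hper : ∀ x, f (x + 4) = f x) :
    ∫⁻ v, Gf p s v * f v = ∫⁻ v in Ico (-2 : ℝ) 2, Pb p s v * f v := by
  rw [lint_partition (fun v => Gf p s v * f v)]
  calc ∑' k : ℤ, ∫⁻ v in Ico (-2 : ℝ) 2, Gf p s (v + 4 * k) * f (v + 4 * k)
      = ∑' k : ℤ, ∫⁻ v in Ico (-2 : ℝ) 2, Gf p s (v + 4 * k) * f v := by
        refine tsum_congr fun k => lintegral_congr fun v => by rw [periodic_int hper]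
    _ = ∫⁻ v in Ico (-2 : ℝ) 2, ∑' k : ℤ, Gf p s (v + 4 * k) * f v :=
        (lintegral_tsum fun k => (((measG hms).comp (measurable_id.add_const _)).mul
          hf).aemeasurable).symm
    _ = ∫⁻ v in Ico (-2 : ℝ) 2, Pb p s v * f v := by
        refine lintegral_congr fun v => ?_
        rw [ENNReal.tsum_mul_right]
        congr 1
        rw [show Pb p s v = ∑' k : ℤ, Gf p s (v - 4 * k) from rfl,
          ← (Equiv.neg ℤ).tsum_eq (fun k : ℤ => Gf p s (v - 4 * k))]
        exact tsum_congr fun k => by congr 1; simp only [Equiv.neg_apply, Int.cast_neg]; ring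

lemma massPb (hms : Measurable (p s)) (hnns : ∀ u, 0 ≤ p s u) (h1s : ∫ u, p s u = 1) :
    ∫⁻ v in Ico (-2 : ℝ) 2, Pb p s v = 1 := by
  have h := foldPb (p := p) hms (fun _ => 1) measurable_const (fun _ => rfl)
  simp only [mul_one] at h
  rw [← h, lintG hms hnns h1s]

lemma mass_shift (hms : Measurable (p s)) (hnns : ∀ u, 0 ≤ p s u) (h1s : ∫ u, p s u = 1)
    (hevs : ∀ u, p s (-u) = p s u) (u : ℝ) :
    ∫⁻ v in Ico (-2 : ℝ) 2, Pb p s (u - v) = 1 := by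
  have heq : ∀ v, Pb p s (u - v) = Pb p s (v + (-u)) := fun v => by
    rw [show (u - v) = -(v + (-u)) from by ring, Pb_even hevs]
  simp_rw [heq]
  rw [lint_periodic_shift (fun x => Pb_periodic x) (-u)]
  exact massPb hms hnns h1s

lemma conv2 (hms : Measurable (p s)) (hmt : Measurable (p t))
    (hconvG : ∀ w, Gf p (s + t) w = ∫⁻ v, Gf p s v * Gf p t (w - v)) :
    Pb p (s + t) u = ∫⁻ v in Ico (-2 : ℝ) 2, Pb p s v * Pb p t (u - v) := by
  rw [convPb hms hmt hconvG]
  refine foldPb hms (fun v => Pb p t (u - v))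
    ((measPb hmt).comp (measurable_const.sub measurable_id)) (fun x => ?_)
  have h := Pb_periodic (p := p) (t := t) (u - x - 4)
  rw [show (u - x - 4) + 4 = u - x from by ring] at h
  show Pb p t (u - (x + 4)) = Pb p t (u - x)
  rw [show u - (x + 4) = u - x - 4 from by ring, ← h]

lemma Pb_bound (hms : Measurable (p s)) (hevs : ∀ u, p s (-u) = p s u)
    (hconvG : ∀ w, Gf p (s + s) w = ∫⁻ v, Gf p s v * Gf p s (w - v)) (u : ℝ) :
    Pb p (s + s) u ≤ 2 * Pb p (s + s) 0 := by
  set F : ℝ → ℝ≥0∞ := fun w => Pb p s w * Pb p s w with hF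
  have hFm : Measurable F := (measPb hms).mul (measPb hms)
  have hFper : ∀ x, F (x + 4) = F x := fun x => by
    simp only [hF]; rw [Pb_periodic]
  have hint0 : Pb p (s + s) 0 = ∫⁻ v in Ico (-2 : ℝ) 2, F v := by
    rw [conv2 (u := 0) hms hms hconvG]
    refine setLIntegral_congr_fun measurableSet_Ico (fun v _ => ?_)
    rw [show ((0 : ℝ) - v) = -v from by ring, Pb_even hevs]
  have hshift : ∫⁻ v in Ico (-2 : ℝ) 2, F (u - v) = ∫⁻ v in Ico (-2 : ℝ) 2, F v := by
    have heq : ∀ v, F (u - v) = F (v + (-u)) := fun v => by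
      rw [show (u - v) = -(v + (-u)) from by ring]
      simp only [hF]
      rw [Pb_even hevs]
    simp_rw [heq]
    exact lint_periodic_shift hFper (-u)
  calc Pb p (s + s) u = ∫⁻ v in Ico (-2 : ℝ) 2, Pb p s v * Pb p s (u - v) :=
        conv2 hms hms hconvG
    _ ≤ ∫⁻ v in Ico (-2 : ℝ) 2, (F v + F (u - v)) :=
        setLIntegral_mono (hFm.add (hFm.comp (measurable_const.sub measurable_id)))
          fun v _ => ennreal_amgm _ _
    _ = (∫⁻ v in Ico (-2 : ℝ) 2, F v) + ∫⁻ v in Ico (-2 : ℝ) 2, F (u - v) :=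
        lintegral_add_left hFm _
    _ = 2 * Pb p (s + s) 0 := by rw [hshift, ← hint0, two_mul]

variable {p : ℝ → ℝ → ℝ} {s r u : ℝ}

lemma avg_bound
    (hms : Measurable (p s)) (hnns : ∀ u, 0 ≤ p s u) (h1s : ∫ u, p s u = 1)
    (hnnr : ∀ u, 0 ≤ p r u) (hsumr : ∀ u : ℝ, Summable fun k : ℤ => p r (u - 4 * k))
    (hnnsr : ∀ u, 0 ≤ p (s + r) u)
    (hsumsr : ∀ u : ℝ, Summable fun k : ℤ => p (s + r) (u - 4 * k))
    (hconvPb : ∀ u : ℝ, Pb p (s + r) u = ∫⁻ v, Gf p s v * Pb p r (u - v))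
    {M : ℝ} (hM0 : 0 ≤ M) (hMb : ∀ w : ℝ, |Pbar p r w - 1/4| ≤ M) (u : ℝ) :
    |Pbar p (s + r) u - 1/4| ≤ M := by
  have hup : ∀ w : ℝ, Pb p r w ≤ ENNReal.ofReal (1/4 + M) := fun w => by
    rw [Pbar_eq hnnr (hsumr w)]
    exact ENNReal.ofReal_le_ofReal (by have := abs_le.1 (hMb w); linarith)
  have hlo : ∀ w : ℝ, ENNReal.ofReal (1/4 - M) ≤ Pb p r w := fun w => by
    rw [Pbar_eq hnnr (hsumr w)]
    exact ENNReal.ofReal_le_ofReal (by have := abs_le.1 (hMb w); linarith)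
  have hPbup : Pb p (s + r) u ≤ ENNReal.ofReal (1/4 + M) := by
    rw [hconvPb u]
    calc ∫⁻ v, Gf p s v * Pb p r (u - v)
        ≤ ∫⁻ v, Gf p s v * ENNReal.ofReal (1/4 + M) :=
          lintegral_mono fun v => mul_le_mul_right (hup _) _
      _ = (∫⁻ v, Gf p s v) * ENNReal.ofReal (1/4 + M) := lintegral_mul_const _ (measG hms)
      _ = ENNReal.ofReal (1/4 + M) := by rw [lintG hms hnns h1s, one_mul]
  have hPblo : ENNReal.ofReal (1/4 - M) ≤ Pb p (s + r) u := by
    calc ENNReal.ofReal (1/4 - M) = (∫⁻ v, Gf p s v) * ENNReal.ofReal (1/4 - M) := by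
          rw [lintG hms hnns h1s, one_mul]
      _ = ∫⁻ v, Gf p s v * ENNReal.ofReal (1/4 - M) := (lintegral_mul_const _ (measG hms)).symm
      _ ≤ ∫⁻ v, Gf p s v * Pb p r (u - v) :=
          lintegral_mono fun v => mul_le_mul_right (hlo _) _
      _ = Pb p (s + r) u := (hconvPb u).symm
  have hne : Pb p (s + r) u ≠ ∞ := Pb_ne_top hnnsr (hsumsr u)
  have h1 : Pbar p (s + r) u ≤ 1/4 + M := by
    rw [Pbar_toReal hnnsr (hsumsr u)]
    exact ENNReal.toReal_le_of_le_ofReal (by linarith) hPbup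
  have h2 : 1/4 - M ≤ Pbar p (s + r) u := by
    rw [Pbar_toReal hnnsr (hsumsr u)]
    exact (ENNReal.ofReal_le_iff_le_toReal hne).1 hPblo
  exact abs_le.2 ⟨by linarith, by linarith⟩

lemma contr_bound
    (hm1 : Measurable (p 1)) (hnn1 : ∀ u, 0 ≤ p 1 u)
    (hsum1 : ∀ u : ℝ, Summable fun k : ℤ => p 1 (u - 4 * k))
    (hmr : Measurable (p r))
    (hnnr : ∀ u, 0 ≤ p r u) (hsumr : ∀ u : ℝ, Summable fun k : ℤ => p r (u - 4 * k))
    (hnn1r : ∀ u, 0 ≤ p (1 + r) u)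
    (hsum1r : ∀ u : ℝ, Summable fun k : ℤ => p (1 + r) (u - 4 * k))
    (hconv2 : ∀ u : ℝ, Pb p (1 + r) u = ∫⁻ v in Ico (-2 : ℝ) 2, Pb p 1 v * Pb p r (u - v))
    (hmass1 : ∫⁻ v in Ico (-2 : ℝ) 2, Pb p 1 v = 1)
    (hmassr : ∀ u : ℝ, ∫⁻ v in Ico (-2 : ℝ) 2, Pb p r (u - v) = 1)
    {q M : ℝ} (hq0 : 0 ≤ q) (hq : ∀ v ∈ Ico (-2 : ℝ) 2, q ≤ Pbar p 1 v) (hq4 : 4 * q ≤ 1)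
    (hM0 : 0 ≤ M) (hMb : ∀ w : ℝ, |Pbar p r w - 1/4| ≤ M) (u : ℝ) :
    |Pbar p (1 + r) u - 1/4| ≤ (1 - 4 * q) * M := by
  set X : ℝ → ℝ≥0∞ := fun v => Pb p r (u - v) with hX
  have hXm : Measurable X := (measPb hmr).comp (measurable_const.sub measurable_id)
  have hXup : ∀ v : ℝ, X v ≤ ENNReal.ofReal (1/4 + M) := fun v => by
    rw [hX]; simp only
    rw [Pbar_eq hnnr (hsumr (u - v))]
    exact ENNReal.ofReal_le_ofReal (by have := abs_le.1 (hMb (u - v)); linarith)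
  have hXlo : ∀ v : ℝ, ENNReal.ofReal (1/4 - M) ≤ X v := fun v => by
    rw [hX]; simp only
    rw [Pbar_eq hnnr (hsumr (u - v))]
    exact ENNReal.ofReal_le_ofReal (by have := abs_le.1 (hMb (u - v)); linarith)
  have hq' : ∀ v ∈ Ico (-2 : ℝ) 2, ENNReal.ofReal q ≤ Pb p 1 v := fun v hv => by
    rw [Pbar_eq hnn1 (hsum1 v)]
    exact ENNReal.ofReal_le_ofReal (hq v hv)
  have hmeas1q : Measurable fun v => Pb p 1 v - ENNReal.ofReal q :=
    (measPb hm1).sub measurable_const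
  have hsplit : Pb p (1 + r) u
      = (∫⁻ v in Ico (-2 : ℝ) 2, ENNReal.ofReal q * X v)
        + ∫⁻ v in Ico (-2 : ℝ) 2, (Pb p 1 v - ENNReal.ofReal q) * X v := by
    rw [hconv2 u, ← lintegral_add_left (f := fun v => ENNReal.ofReal q * X v) (measurable_const.mul hXm)]
    refine setLIntegral_congr_fun measurableSet_Ico (fun v hv => ?_)
    rw [← add_mul, add_tsub_cancel_of_le (hq' v hv)]
  have hA : ∫⁻ v in Ico (-2 : ℝ) 2, ENNReal.ofReal q * X v = ENNReal.ofReal q := by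
    rw [lintegral_const_mul _ hXm]
    simp only [hX]
    rw [hmassr u, mul_one]
  have hconst_ne : (∫⁻ _ in Ico (-2 : ℝ) 2, ENNReal.ofReal q) ≠ ∞ := by
    rw [setLIntegral_const]
    exact ENNReal.mul_ne_top ENNReal.ofReal_ne_top (by simp [Real.volume_Ico])
  have hJ : ∫⁻ v in Ico (-2 : ℝ) 2, (Pb p 1 v - ENNReal.ofReal q) = ENNReal.ofReal (1 - 4 * q) := by
    rw [lintegral_sub measurable_const hconst_ne
      ((ae_restrict_iff' measurableSet_Ico).2 (Filter.Eventually.of_forall hq')),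
      hmass1, setLIntegral_const, Real.volume_Ico]
    rw [show ((2 : ℝ) - (-2)) = 4 from by norm_num, ← ENNReal.ofReal_mul hq0]
    have h4 : ENNReal.ofReal (1 - 4 * q) = ENNReal.ofReal 1 - ENNReal.ofReal (q * 4) := by
      rw [← ENNReal.ofReal_sub 1 (by linarith : (0:ℝ) ≤ q * 4)]
      ring_nf
    rw [h4, ENNReal.ofReal_one]
  have hBup : ∫⁻ v in Ico (-2 : ℝ) 2, (Pb p 1 v - ENNReal.ofReal q) * X v
      ≤ ENNReal.ofReal (1 - 4 * q) * ENNReal.ofReal (1/4 + M) := by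
    calc ∫⁻ v in Ico (-2 : ℝ) 2, (Pb p 1 v - ENNReal.ofReal q) * X v
        ≤ ∫⁻ v in Ico (-2 : ℝ) 2, (Pb p 1 v - ENNReal.ofReal q) * ENNReal.ofReal (1/4 + M) :=
          setLIntegral_mono (hmeas1q.mul measurable_const)
            fun v _ => mul_le_mul_right (hXup v) _
      _ = (∫⁻ v in Ico (-2 : ℝ) 2, (Pb p 1 v - ENNReal.ofReal q)) * ENNReal.ofReal (1/4 + M) :=
          lintegral_mul_const _ hmeas1q
      _ = ENNReal.ofReal (1 - 4 * q) * ENNReal.ofReal (1/4 + M) := by rw [hJ]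
  have hBlo : ENNReal.ofReal (1 - 4 * q) * ENNReal.ofReal (1/4 - M)
      ≤ ∫⁻ v in Ico (-2 : ℝ) 2, (Pb p 1 v - ENNReal.ofReal q) * X v := by
    calc ENNReal.ofReal (1 - 4 * q) * ENNReal.ofReal (1/4 - M)
        = (∫⁻ v in Ico (-2 : ℝ) 2, (Pb p 1 v - ENNReal.ofReal q)) * ENNReal.ofReal (1/4 - M) := by
          rw [hJ]
      _ = ∫⁻ v in Ico (-2 : ℝ) 2, (Pb p 1 v - ENNReal.ofReal q) * ENNReal.ofReal (1/4 - M) :=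
          (lintegral_mul_const _ hmeas1q).symm
      _ ≤ ∫⁻ v in Ico (-2 : ℝ) 2, (Pb p 1 v - ENNReal.ofReal q) * X v :=
          setLIntegral_mono (hmeas1q.mul hXm) fun v _ => mul_le_mul_right (hXlo v) _
  have h14q : (0:ℝ) ≤ 1 - 4 * q := by linarith
  have hne : Pb p (1 + r) u ≠ ∞ := Pb_ne_top hnn1r (hsum1r u)
  have hup2 : Pbar p (1 + r) u ≤ q + (1 - 4 * q) * (1/4 + M) := by
    rw [Pbar_toReal hnn1r (hsum1r u)]
    refine ENNReal.toReal_le_of_le_ofReal (by nlinarith) ?_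
    rw [hsplit]
    calc (∫⁻ v in Ico (-2 : ℝ) 2, ENNReal.ofReal q * X v)
          + ∫⁻ v in Ico (-2 : ℝ) 2, (Pb p 1 v - ENNReal.ofReal q) * X v
        ≤ ENNReal.ofReal q + ENNReal.ofReal (1 - 4 * q) * ENNReal.ofReal (1/4 + M) :=
          add_le_add (le_of_eq hA) hBup
      _ = ENNReal.ofReal (q + (1 - 4 * q) * (1/4 + M)) := by
          rw [← ENNReal.ofReal_mul h14q, ← ENNReal.ofReal_add hq0 (by nlinarith)]
  have hlo2 : q + (1 - 4 * q) * (1/4 - M) ≤ Pbar p (1 + r) u := by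
    rw [Pbar_toReal hnn1r (hsum1r u)]
    refine (ENNReal.ofReal_le_iff_le_toReal hne).1 ?_
    calc ENNReal.ofReal (q + (1 - 4 * q) * (1/4 - M))
        ≤ ENNReal.ofReal q + ENNReal.ofReal ((1 - 4 * q) * (1/4 - M)) :=
          ENNReal.ofReal_add_le
      _ = ENNReal.ofReal q + ENNReal.ofReal (1 - 4 * q) * ENNReal.ofReal (1/4 - M) := by
          rw [ENNReal.ofReal_mul h14q]
      _ ≤ (∫⁻ v in Ico (-2 : ℝ) 2, ENNReal.ofReal q * X v)
          + ∫⁻ v in Ico (-2 : ℝ) 2, (Pb p 1 v - ENNReal.ofReal q) * X v :=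
          add_le_add (le_of_eq hA.symm) hBlo
      _ = Pb p (1 + r) u := hsplit.symm
  have hid1 : q + (1 - 4 * q) * (1/4 + M) = 1/4 + (1 - 4 * q) * M := by ring
  have hid2 : q + (1 - 4 * q) * (1/4 - M) = 1/4 - (1 - 4 * q) * M := by ring
  rw [hid1] at hup2
  rw [hid2] at hlo2
  exact abs_le.2 ⟨by linarith, by linarith⟩

end Thm1Aux

open Thm1Aux

/-- (Theorem 1) For `t nᵃ ≥ 1`, with `L = ⌊t nᵃ⌋`,
`sup_{u ∈ [-1,1]} |Π_{t,n}(u) - 1/2| ≤ 2 (1 - 4Q₁)^(L-1) sup_{u ∈ [-2,2)} |P̄₁(u) - 1/4|`. -/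
theorem theorem1 (a : ℝ) (ha : 0 < a) (ha2 : a ≤ 2) (p : ℝ → ℝ → ℝ)
    (hmeas : ∀ t, 0 < t → Measurable (p t))
    (hnn : ∀ t, 0 < t → ∀ u, 0 ≤ p t u)
    (heven : ∀ t, 0 < t → ∀ u, p t (-u) = p t u)
    (hone : ∀ t, 0 < t → ∫ u, p t u = 1)
    (hbdd : ∀ t, 0 < t → ∃ C : ℝ, ∀ u, p t u ≤ C)
    (hconv : ∀ s t : ℝ, 0 < s → 0 < t → ∀ u, p (s + t) u = ∫ v, p s v * p t (u - v))
    (hsum : ∀ t, 0 < t → ∀ u : ℝ, Summable fun k : ℤ => p t (u - 4 * k))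
    (hQ : ∀ t, 0 < t → 0 < Qinf p t)
    (hscal : ∀ t, 0 < t → ∀ u : ℝ, p t u = t ^ (-1 / a) * p 1 (t ^ (-1 / a) * u))
    (n : ℕ) (hn : 0 < n) (t : ℝ) (ht : 0 < t) (htn : 1 ≤ t * (n : ℝ) ^ a) :
    sSup ((fun u => |PiTN p t n u - 1 / 2|) '' Set.Icc (-1 : ℝ) 1)
      ≤ 2 * (1 - 4 * Qinf p 1) ^ (⌊t * (n : ℝ) ^ a⌋₊ - 1) *
          sSup ((fun u => |Pbar p 1 u - 1 / 4|) '' Set.Ico (-2 : ℝ) 2) := by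
  classical
  set s : ℝ := t * (n : ℝ) ^ a with hs_def
  have hna : (0:ℝ) < (n : ℝ) ^ a := Real.rpow_pos_of_pos (by exact_mod_cast hn) a
  have hs0 : 0 < s := by positivity
  have hs1 : 1 ≤ s := htn
  -- generic convolution identity in ENNReal
  have hconvG' : ∀ σ τ : ℝ, 0 < σ → 0 < τ → ∀ w : ℝ,
      Gf p (σ + τ) w = ∫⁻ v, Gf p σ v * Gf p τ (w - v) := by
    intro σ τ hσ hτ w
    obtain ⟨C, hC⟩ := hbdd τ hτ
    exact convG (hmeas σ hσ) (hmeas τ hτ) (hnn σ hσ) (hnn τ hτ) (hone σ hσ) hC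
      (hconv σ τ hσ hτ w)
  have hPbbound : ∀ r : ℝ, 0 < r → ∀ u : ℝ, Pb p r u ≤ 2 * Pb p r 0 := by
    intro r hr u
    have h2 : 0 < r / 2 := by linarith
    have h := Pb_bound (s := r/2) (hmeas _ h2) (heven _ h2) (hconvG' _ _ h2 h2) u
    rwa [add_halves] at h
  -- the sup functional
  set M : ℝ → ℝ := fun r => sSup ((fun u => |Pbar p r u - 1 / 4|) '' Set.Ico (-2 : ℝ) 2)
    with hM_def
  have hImNe : ∀ r : ℝ, ((fun u => |Pbar p r u - 1 / 4|) '' Set.Ico (-2 : ℝ) 2).Nonempty :=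
    fun r => ⟨_, ⟨-2, by norm_num [Set.mem_Ico], rfl⟩⟩
  have hPbar_nonneg : ∀ r : ℝ, 0 < r → ∀ w : ℝ, 0 ≤ Pbar p r w := by
    intro r hr w
    unfold Pbar
    exact tsum_nonneg fun k => hnn r hr _
  have hBdd : ∀ r : ℝ, 0 < r →
      BddAbove ((fun u => |Pbar p r u - 1 / 4|) '' Set.Ico (-2 : ℝ) 2) := by
    intro r hr
    refine ⟨(2 * Pb p r 0).toReal + 1 / 4, ?_⟩
    rintro x ⟨u, -, rfl⟩
    have hfin : (2 : ℝ≥0∞) * Pb p r 0 ≠ ∞ :=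
      ENNReal.mul_ne_top ENNReal.ofNat_ne_top (Pb_ne_top (hnn r hr) (hsum r hr 0))
    have h1 : Pbar p r u ≤ (2 * Pb p r 0).toReal := by
      rw [Pbar_toReal (hnn r hr) (hsum r hr u)]
      exact ENNReal.toReal_mono hfin (hPbbound r hr u)
    have h0 : 0 ≤ Pbar p r u := hPbar_nonneg r hr u
    have h2 : (0:ℝ) ≤ (2 * Pb p r 0).toReal := ENNReal.toReal_nonneg
    rw [abs_le]
    constructor <;> linarith
  have hM0 : ∀ r : ℝ, 0 ≤ M r := by
    intro r
    apply Real.sSup_nonneg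
    rintro x ⟨u, -, rfl⟩
    exact abs_nonneg _
  have hMb : ∀ r : ℝ, 0 < r → ∀ w : ℝ, |Pbar p r w - 1 / 4| ≤ M r := by
    intro r hr w
    set k : ℤ := ⌊(w + 2) / 4⌋ with hk
    have hfl := Int.floor_le ((w + 2) / 4)
    have hfl2 := Int.lt_floor_add_one ((w + 2) / 4)
    have hmem : w - 4 * (k : ℝ) ∈ Set.Ico (-2 : ℝ) 2 := by
      constructor
      · nlinarith
      · nlinarith
    have hper : Pbar p r (w - 4 * (k : ℝ)) = Pbar p r w := by
      have hP : Function.Periodic (Pbar p r) 4 := fun x => Pbar_periodic x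
      have h := hP.sub_int_mul_eq (x := w) (n := k)
      rwa [show (k : ℝ) * 4 = 4 * k from by ring] at h
    calc |Pbar p r w - 1 / 4| = |Pbar p r (w - 4 * (k:ℝ)) - 1 / 4| := by rw [hper]
      _ ≤ M r := le_csSup (hBdd r hr) ⟨w - 4 * (k:ℝ), hmem, rfl⟩
  -- facts about q
  set q : ℝ := Qinf p 1 with hq_def
  have hq0 : 0 ≤ q := le_of_lt (hQ 1 one_pos)
  have hqle : ∀ v ∈ Set.Ico (-2 : ℝ) 2, q ≤ Pbar p 1 v := by
    intro v hv
    refine csInf_le ⟨0, ?_⟩ ⟨v, hv, rfl⟩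
    rintro x ⟨u, -, rfl⟩
    exact hPbar_nonneg 1 one_pos u
  have hq'' : ∀ v ∈ Set.Ico (-2 : ℝ) 2, ENNReal.ofReal q ≤ Pb p 1 v := by
    intro v hv
    rw [Pbar_eq (hnn 1 one_pos) (hsum 1 one_pos v)]
    exact ENNReal.ofReal_le_ofReal (hqle v hv)
  have hmass1 : ∫⁻ v in Set.Ico (-2 : ℝ) 2, Pb p 1 v = 1 :=
    massPb (hmeas 1 one_pos) (hnn 1 one_pos) (hone 1 one_pos)
  have hq4 : 4 * q ≤ 1 := by
    have hle : ENNReal.ofReal q * ENNReal.ofReal 4 ≤ 1 := by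
      calc ENNReal.ofReal q * ENNReal.ofReal 4
          = ∫⁻ _ in Set.Ico (-2 : ℝ) 2, ENNReal.ofReal q := by
            rw [setLIntegral_const, Real.volume_Ico]
            norm_num
        _ ≤ ∫⁻ v in Set.Ico (-2 : ℝ) 2, Pb p 1 v :=
            setLIntegral_mono (measPb (hmeas 1 one_pos)) hq''
        _ = 1 := hmass1
    rw [← ENNReal.ofReal_mul hq0, ← ENNReal.ofReal_one] at hle
    have := (ENNReal.ofReal_le_ofReal_iff (by norm_num)).1 hle
    linarith
  have h14q : (0:ℝ) ≤ 1 - 4 * q := by linarith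
  -- contraction step
  have hcontr : ∀ r : ℝ, 0 < r → ∀ u : ℝ, |Pbar p (1 + r) u - 1 / 4| ≤ (1 - 4 * q) * M r := by
    intro r hr u
    have h1r : (0:ℝ) < 1 + r := by linarith
    exact contr_bound (hmeas 1 one_pos) (hnn 1 one_pos) (hsum 1 one_pos)
      (hmeas r hr) (hnn r hr) (hsum r hr) (hnn _ h1r) (hsum _ h1r)
      (fun w => conv2 (hmeas 1 one_pos) (hmeas r hr) (hconvG' 1 r one_pos hr))
      hmass1
      (fun w => mass_shift (hmeas r hr) (hnn r hr) (hone r hr) (heven r hr) w)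
      hq0 hqle hq4 (hM0 r) (hMb r hr) u
  -- averaging step
  have havg : ∀ σ r : ℝ, 0 < σ → 0 < r → ∀ u : ℝ, |Pbar p (σ + r) u - 1 / 4| ≤ M r := by
    intro σ r hσ hr u
    have hσr : (0:ℝ) < σ + r := by linarith
    exact avg_bound (hmeas σ hσ) (hnn σ hσ) (hone σ hσ) (hnn r hr) (hsum r hr)
      (hnn _ hσr) (hsum _ hσr)
      (fun w => convPb (hmeas σ hσ) (hmeas r hr) (hconvG' σ r hσ hr))
      (hM0 r) (hMb r hr) u
  -- induction chain
  have hchain : ∀ j : ℕ, (j : ℝ) + 1 ≤ s → M s ≤ (1 - 4 * q) ^ j * M (s - j) := by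
    intro j
    induction j with
    | zero => intro _; simp
    | succ j ih =>
      intro hj
      have hj1 : ((j : ℝ) + 1) + 1 ≤ s := by push_cast at hj; linarith
      have hj' : (j : ℝ) + 1 ≤ s := by linarith
      have hr0 : 0 < s - ((j : ℝ) + 1) := by linarith
      have hMle : M (s - (j : ℝ)) ≤ (1 - 4 * q) * M (s - ((j : ℝ) + 1)) := by
        have heq : s - (j : ℝ) = 1 + (s - ((j : ℝ) + 1)) := by ring
        rw [heq]
        refine csSup_le (hImNe _) ?_
        rintro x ⟨u, -, rfl⟩
        exact hcontr _ hr0 u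
      calc M s ≤ (1 - 4 * q) ^ j * M (s - j) := ih hj'
        _ ≤ (1 - 4 * q) ^ j * ((1 - 4 * q) * M (s - ((j : ℝ) + 1))) :=
            mul_le_mul_of_nonneg_left hMle (pow_nonneg h14q j)
        _ = (1 - 4 * q) ^ (j + 1) * M (s - ((j + 1 : ℕ) : ℝ)) := by
            push_cast
            ring
  set L : ℕ := ⌊s⌋₊ with hL_def
  have hL1 : 1 ≤ L := Nat.le_floor (by exact_mod_cast hs1)
  have hLs : (L : ℝ) ≤ s := Nat.floor_le (le_of_lt hs0)
  have hcast : ((L - 1 : ℕ) : ℝ) = (L : ℝ) - 1 := by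
    rw [Nat.cast_sub hL1]; norm_num
  have h1 : M s ≤ (1 - 4 * q) ^ (L - 1) * M (s - ((L - 1 : ℕ) : ℝ)) :=
    hchain (L - 1) (by rw [hcast]; linarith)
  have h2 : M (s - ((L - 1 : ℕ) : ℝ)) ≤ M 1 := by
    rcases eq_or_lt_of_le hLs with heq | hlt
    · have harg : s - ((L - 1 : ℕ) : ℝ) = 1 := by rw [hcast, ← heq]; ring
      rw [harg]
    · have hσ : 0 < s - (L : ℝ) := by linarith
      have harg : s - ((L - 1 : ℕ) : ℝ) = (s - (L : ℝ)) + 1 := by rw [hcast]; ring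
      rw [harg]
      refine csSup_le (hImNe _) ?_
      rintro x ⟨u, -, rfl⟩
      exact havg _ 1 hσ one_pos u
  have hMs : M s ≤ (1 - 4 * q) ^ (L - 1) * M 1 :=
    h1.trans (mul_le_mul_of_nonneg_left h2 (pow_nonneg h14q _))
  -- scaling: p t x = n * p s (n x)
  have hnne : ((n : ℝ)) ≠ 0 := by exact_mod_cast hn.ne'
  have hscale : ∀ x : ℝ, p t x = (n : ℝ) * p s ((n : ℝ) * x) := by
    intro x
    rw [hscal t ht x, hscal s hs0 ((n : ℝ) * x)]
    have e1 : s ^ (-1/a) = t ^ (-1/a) * ((n : ℝ))⁻¹ := by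
      rw [hs_def, Real.mul_rpow (le_of_lt ht) (le_of_lt hna)]
      have hn0 : (0:ℝ) ≤ (n : ℝ) := Nat.cast_nonneg n
      congr 1
      rw [← Real.rpow_mul hn0, show a * (-1/a) = -1 from by rw [neg_div, mul_neg, mul_one_div, div_self ha.ne'], Real.rpow_neg_one]
    rw [e1]
    have e2 : t ^ (-1/a) * ((n : ℝ))⁻¹ * ((n : ℝ) * x) = t ^ (-1/a) * x := by
      field_simp
    rw [e2]
    field_simp
  -- even/odd splitting
  have hEo : ∀ v : ℝ, HasSum (fun k : ℤ => p s (v - 2 * k)) (Pbar p s v + Pbar p s (v - 2)) := by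
    intro v
    have hA : HasSum (fun k : ℤ => p s (v - 2 * ((2 * k : ℤ) : ℝ))) (Pbar p s v) := by
      have hfn : (fun k : ℤ => p s (v - 2 * ((2 * k : ℤ) : ℝ)))
          = fun k : ℤ => p s (v - 4 * k) := by
        funext k; congr 1; push_cast; ring
      rw [hfn]
      exact (hsum s hs0 v).hasSum
    have hB : HasSum (fun k : ℤ => p s (v - 2 * ((2 * k + 1 : ℤ) : ℝ))) (Pbar p s (v - 2)) := by
      have hfn : (fun k : ℤ => p s (v - 2 * ((2 * k + 1 : ℤ) : ℝ)))
          = fun k : ℤ => p s ((v - 2) - 4 * k) := by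
        funext k; congr 1; push_cast; ring
      rw [hfn]
      exact (hsum s hs0 (v - 2)).hasSum
    have hg1 : Function.Injective (fun k : ℤ => 2 * k) := fun a b h => by dsimp only at h; omega
    have hg2 : Function.Injective (fun k : ℤ => 2 * k + 1) := fun a b h => by dsimp only at h; omega
    have hEc : Set.range (fun k : ℤ => 2 * k + 1) = (Set.range (fun k : ℤ => 2 * k))ᶜ := by
      ext m
      simp only [Set.mem_range, Set.mem_compl_iff]
      constructor
      · rintro ⟨j, rfl⟩ ⟨i, hi⟩; omega
      · intro h
        rcases Int.even_or_odd m with ⟨j, hj⟩ | ⟨j, hj⟩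
        · exact absurd ⟨j, by omega⟩ h
        · exact ⟨j, by omega⟩
    have hE : HasSum ((fun k : ℤ => p s (v - 2 * k)) ∘ (Subtype.val) :
        (Set.range (fun k : ℤ => 2 * k)) → ℝ) (Pbar p s v) := by
      rw [← (Equiv.ofInjective _ hg1).hasSum_iff]
      exact hA
    have hO : HasSum ((fun k : ℤ => p s (v - 2 * k)) ∘ (Subtype.val) :
        ((Set.range (fun k : ℤ => 2 * k))ᶜ : Set ℤ) → ℝ) (Pbar p s (v - 2)) := by
      rw [← hEc, ← (Equiv.ofInjective _ hg2).hasSum_iff]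
      exact hB
    exact hE.add_compl hO
  have hPiTN : ∀ u : ℝ, PiTN p t n u = Pbar p s ((n:ℝ) * u) + Pbar p s ((n:ℝ) * u - 2) := by
    intro u
    unfold PiTN
    calc (1 / (n:ℝ)) * ∑' k : ℤ, p t (u - 2 * k / n)
        = (1 / (n:ℝ)) * ∑' k : ℤ, (n : ℝ) * p s ((n:ℝ) * u - 2 * k) := by
          congr 1
          refine tsum_congr fun k => ?_
          rw [hscale]
          congr 1
          field_simp
      _ = (1 / (n:ℝ)) * ((n : ℝ) * ∑' k : ℤ, p s ((n:ℝ) * u - 2 * k)) := by rw [tsum_mul_left]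
      _ = ∑' k : ℤ, p s ((n:ℝ) * u - 2 * k) := by field_simp
      _ = Pbar p s ((n:ℝ) * u) + Pbar p s ((n:ℝ) * u - 2) := (hEo _).tsum_eq
  -- final bound
  refine csSup_le ⟨_, ⟨-1, by norm_num [Set.mem_Icc], rfl⟩⟩ ?_
  rintro x ⟨u, -, rfl⟩
  have key : |PiTN p t n u - 1 / 2| ≤ 2 * ((1 - 4 * q) ^ (L - 1) * M 1) := by
    calc |PiTN p t n u - 1 / 2|
        = |(Pbar p s ((n:ℝ)*u) - 1/4) + (Pbar p s ((n:ℝ)*u - 2) - 1/4)| := by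
          rw [hPiTN u]; congr 1; ring
      _ ≤ |Pbar p s ((n:ℝ)*u) - 1/4| + |Pbar p s ((n:ℝ)*u - 2) - 1/4| := abs_add_le _ _
      _ ≤ M s + M s := add_le_add (hMb s hs0 _) (hMb s hs0 _)
      _ = 2 * M s := by ring
      _ ≤ 2 * ((1 - 4 * q) ^ (L - 1) * M 1) := by linarith
  calc |PiTN p t n u - 1 / 2| ≤ 2 * ((1 - 4 * q) ^ (L - 1) * M 1) := key
    _ = 2 * (1 - 4 * Qinf p 1) ^ (⌊t * (n : ℝ) ^ a⌋₊ - 1) *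
        sSup ((fun u => |Pbar p 1 u - 1 / 4|) '' Set.Ico (-2 : ℝ) 2) := by
      rw [hM_def, hq_def, hL_def, hs_def]
      ring
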